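/- Let G be a graph on 2n vertices with Hamiltonian cycle v₁, v₂, ..., v_{2n}, v₁, and suppose neither G nor its complement contains a cycle of length 2n - 1. Then both sets {v₁, v₃, ..., v_{2n-1}} and {v₂, v₄, ..., v_{2n}} are independent in G. -/

import Mathlib

open SimpleGraph Finset

/-- `G` contains a cycle of length `t`. -/
def HasCycleLen {V : Type*} (G : SimpleGraph V) (t : ℕ) : Prop :=
  ∃ (v : V) (w : G.Walk v v), w.IsCycle ∧ w.length = t

private def chainWalk {V : Type*} (G : SimpleGraph V) (f : ℕ → V) (m : ℕ)
    (hadj : ∀ t, t + 1 < m → G.Adj (f t) (f (t + 1))) :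
    (k : ℕ) → k < m → G.Walk (f k) (f (m - 1))
  | k, hk =>
    if h : k = m - 1 then
      (SimpleGraph.Walk.nil : G.Walk (f (m-1)) (f (m-1))).copy (congrArg f h.symm) rfl
    else
      SimpleGraph.Walk.cons (hadj k (by omega)) (chainWalk G f m hadj (k + 1) (by omega))
  termination_by k _ => m - k

private lemma chainWalk_support {V : Type*} (G : SimpleGraph V) (f : ℕ → V) (m : ℕ)
    (hadj : ∀ t, t + 1 < m → G.Adj (f t) (f (t + 1))) :
    ∀ (j k : ℕ) (hk : k < m), m - 1 - k = j →
      (chainWalk G f m hadj k hk).support = (List.range' k (m - k)).map f := by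
  intro j
  induction j with
  | zero =>
    intro k hk hj
    have hk' : k = m - 1 := by omega
    rw [chainWalk, dif_pos hk']
    have : m - k = 1 := by omega
    rw [this]
    simp [hk']
  | succ j ih =>
    intro k hk hj
    rw [chainWalk, dif_neg (by omega : ¬ k = m - 1)]
    rw [SimpleGraph.Walk.support_cons, ih (k+1) (by omega) (by omega)]
    have : m - k = (m - (k+1)) + 1 := by omega
    rw [this, List.range'_succ]
    simp

private lemma chainWalk_edges {V : Type*} (G : SimpleGraph V) (f : ℕ → V) (m : ℕ)
    (hadj : ∀ t, t + 1 < m → G.Adj (f t) (f (t + 1))) :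
    ∀ (j k : ℕ) (hk : k < m), m - 1 - k = j →
      (chainWalk G f m hadj k hk).edges
        = (List.range' k (m - 1 - k)).map (fun t => s(f t, f (t+1))) := by
  intro j
  induction j with
  | zero =>
    intro k hk hj
    have hk' : k = m - 1 := by omega
    rw [chainWalk, dif_pos hk']
    simp [hj]
  | succ j ih =>
    intro k hk hj
    rw [chainWalk, dif_neg (by omega : ¬ k = m - 1)]
    rw [SimpleGraph.Walk.edges_cons, ih (k+1) (by omega) (by omega)]
    have : m - 1 - k = (m - 1 - (k+1)) + 1 := by omega
    rw [this, List.range'_succ]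
    simp

private lemma hasCycleLen_of_fn {V : Type*} (G : SimpleGraph V) (m : ℕ) (hm : 3 ≤ m) (f : ℕ → V)
    (hinj : ∀ a, a < m → ∀ b, b < m → f a = f b → a = b)
    (hadj : ∀ t, t + 1 < m → G.Adj (f t) (f (t + 1)))
    (hlast : G.Adj (f (m - 1)) (f 0)) : HasCycleLen G m := by
  have h01 : G.Adj (f 0) (f 1) := hadj 0 (by omega)
  let p : G.Walk (f 1) (f (m-1)) := chainWalk G f m hadj 1 (by omega)
  have hsupp : p.support = (List.range' 1 (m - 1)).map f :=
    chainWalk_support G f m hadj (m - 1 - 1) 1 (by omega) rfl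
  have hedges : p.edges = (List.range' 1 (m - 1 - 1)).map (fun t => s(f t, f (t+1))) :=
    chainWalk_edges G f m hadj (m - 1 - 1) 1 (by omega) rfl
  let q : G.Walk (f 1) (f 0) := p.concat hlast
  refine ⟨f 0, SimpleGraph.Walk.cons h01 q, ?_, ?_⟩
  · rw [SimpleGraph.Walk.cons_isCycle_iff]
    constructor
    · rw [SimpleGraph.Walk.isPath_def]
      show (p.concat hlast).support.Nodup
      rw [SimpleGraph.Walk.support_concat, hsupp, List.nodup_append]
      refine ⟨?_, by simp, ?_⟩
      · refine List.Nodup.map_on ?_ (List.nodup_range' (s := 1) (n := m-1))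
        intro x hx y hy hxy
        rw [List.mem_range'_1] at hx hy
        exact hinj x (by omega) y (by omega) hxy
      · intro a ha
        simp only [List.mem_singleton]
        rw [List.mem_map] at ha
        obtain ⟨x, hx, hfx⟩ := ha
        rw [List.mem_range'_1] at hx
        rintro _ rfl h0
        have : x = 0 := hinj x (by omega) 0 (by omega) (by rw [hfx, h0])
        omega
    · show ¬ s(f 0, f 1) ∈ (p.concat hlast).edges
      rw [SimpleGraph.Walk.edges_concat, List.concat_eq_append]
      intro hmem
      rw [List.mem_append] at hmem
      rcases hmem with hmem | hmem
      · rw [hedges, List.mem_map] at hmem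
        obtain ⟨t, ht, hst⟩ := hmem
        rw [List.mem_range'_1] at ht
        rw [Sym2.eq_iff] at hst
        rcases hst with ⟨h1, h2⟩ | ⟨h1, h2⟩
        · have := hinj t (by omega) 0 (by omega) h1
          omega
        · have := hinj (t+1) (by omega) 0 (by omega) h2
          omega
      · rw [List.mem_singleton, Sym2.eq_iff] at hmem
        rcases hmem with ⟨h1, h2⟩ | ⟨h1, h2⟩
        · have := hinj (m-1) (by omega) 0 (by omega) h1.symm
          omega
        · have := hinj (m-1) (by omega) 1 (by omega) h2.symm
          omega
  · show (SimpleGraph.Walk.cons h01 q).length = m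
    rw [SimpleGraph.Walk.length_cons]
    show (p.concat hlast).length + 1 = m
    rw [SimpleGraph.Walk.length_concat]
    have : p.length = p.edges.length := (SimpleGraph.Walk.length_edges p).symm
    rw [this, hedges]
    simp
    omega

private lemma modN_cases {N x y : ℕ} (hN : 0 < N) (hx : x < 3*N) (hy : y < 3*N)
    (h : x % N = y % N) :
    x = y ∨ x + N = y ∨ y + N = x ∨ x + 2*N = y ∨ y + 2*N = x := by
  have h1 := Nat.div_add_mod x N
  have h2 := Nat.div_add_mod y N
  have hx3 : x / N < 3 := (Nat.div_lt_iff_lt_mul hN).2 (by omega)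
  have hy3 : y / N < 3 := (Nat.div_lt_iff_lt_mul hN).2 (by omega)
  set qx := x / N
  set qy := y / N
  interval_cases qx <;> interval_cases qy <;> omega

private lemma adj_congr {V : Type*} {G : SimpleGraph V} {a b c d : V}
    (h : G.Adj a b) (h1 : a = c) (h2 : b = d) : G.Adj c d := h1 ▸ h2 ▸ h

section AbstractCycle

variable {V : Type*} {G : SimpleGraph V} {n : ℕ} {W : ℕ → V}

private lemma Wsh (hWper : ∀ x, W (x + 2*n) = W x) {x y : ℕ}
    (h : x = y ∨ x + 2*n = y ∨ y + 2*n = x) : W x = W y := by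
  rcases h with rfl | h | h
  · rfl
  · rw [← h]; exact (hWper x).symm
  · rw [← h]; exact hWper y

/-- Step 1: no `G`-edge at cyclic distance 2, else a `(2n-1)`-cycle in `G`. -/
private lemma red2 (hn2 : 2 ≤ n)
    (hham' : ∀ k : ℕ, G.Adj (W k) (W (k + 1)))
    (hWper : ∀ x, W (x + 2*n) = W x)
    (hWinj : ∀ x y : ℕ, W x = W y → x % (2*n) = y % (2*n))
    (hG : ¬ HasCycleLen G (2*n - 1)) :
    ∀ k, k < 2*n → ¬ G.Adj (W k) (W (k + 2)) := by
  intro k hk hadj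
  apply hG
  have hN : 0 < 2*n := by omega
  apply hasCycleLen_of_fn G (2*n - 1) (by omega)
    (fun t => W (k + if t = 0 then 0 else t + 1))
  · intro a ha b hb hab
    have hm := hWinj _ _ hab
    rcases modN_cases hN (by split_ifs <;> (try contradiction) <;> omega) (by split_ifs <;> (try contradiction) <;> omega) hm
      with h' | h' | h' | h' | h' <;> (split_ifs at h' <;> omega)
  · intro t ht
    by_cases h0 : t = 0
    · refine adj_congr hadj (Wsh hWper ?_) (Wsh hWper ?_) <;> (split_ifs <;> (try contradiction) <;> omega)
    · refine adj_congr (hham' (k + t + 1)) (Wsh hWper ?_) (Wsh hWper ?_) <;>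
        (split_ifs <;> (try contradiction) <;> omega)
  · refine adj_congr (hham' (k + 2*n - 1)) (Wsh hWper ?_) (Wsh hWper ?_) <;>
      (split_ifs <;> (try contradiction) <;> omega)

private lemma WperMul (hWper : ∀ x, W (x + 2*n) = W x) :
    ∀ (q x : ℕ), W (x + 2*n*q) = W x := by
  intro q
  induction q with
  | zero => intro x; simp
  | succ q ih =>
    intro x
    have e : x + 2*n*(q+1) = (x + 2*n*q) + 2*n := by ring
    rw [e, hWper, ih]

private lemma Wmod (hWper : ∀ x, W (x + 2*n) = W x) (k : ℕ) :
    W (k % (2*n)) = W k := by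
  conv_rhs => rw [← Nat.mod_add_div k (2*n)]
  exact (WperMul hWper _ _).symm

private lemma Wcongmod (hWper : ∀ x, W (x + 2*n) = W x) {x y : ℕ}
    (h : x % (2*n) = y % (2*n)) : W x = W y := by
  rw [← Wmod hWper x, ← Wmod hWper y, h]

/-- All cyclic-distance-2 pairs are adjacent in the complement. -/
private lemma blueArc (hn2 : 2 ≤ n)
    (hham' : ∀ k : ℕ, G.Adj (W k) (W (k + 1)))
    (hWper : ∀ x, W (x + 2*n) = W x)
    (hWinj : ∀ x y : ℕ, W x = W y → x % (2*n) = y % (2*n))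
    (hG : ¬ HasCycleLen G (2*n - 1)) :
    ∀ k : ℕ, Gᶜ.Adj (W k) (W (k + 2)) := by
  intro k
  have hN : 0 < 2*n := by omega
  have hr : k % (2*n) < 2*n := Nat.mod_lt _ hN
  have e1 : W (k % (2*n)) = W k := Wmod hWper k
  have e2 : W (k % (2*n) + 2) = W (k + 2) := Wcongmod hWper (Nat.mod_add_mod _ _ _)
  rw [← e1, ← e2, SimpleGraph.compl_adj]
  refine ⟨?_, red2 hn2 hham' hWper hWinj hG _ hr⟩
  intro he
  have h3 := hWinj _ _ he
  rcases modN_cases hN (by omega) (by omega) h3 with h' | h' | h' | h' | h' <;> omega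

/-- If `(i, i+d)` is a `G`-edge with `4 ≤ d ≤ 2n-4`, then `(i+1, i+d+2)` is not. -/
private lemma fact1 (hham' : ∀ k : ℕ, G.Adj (W k) (W (k + 1)))
    (hWper : ∀ x, W (x + 2*n) = W x)
    (hWinj : ∀ x y : ℕ, W x = W y → x % (2*n) = y % (2*n))
    (hG : ¬ HasCycleLen G (2*n - 1))
    {I d : ℕ} (hI : I < 2*n) (hd4 : 4 ≤ d) (hd4' : d ≤ 2*n - 4)
    (hchord : G.Adj (W I) (W (I + d))) :
    ¬ G.Adj (W (I + 1)) (W (I + d + 2)) := by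
  intro h
  apply hG
  have hN : 0 < 2*n := by omega
  apply hasCycleLen_of_fn G (2*n - 1) (by omega)
    (fun t => W (if t = 0 then I else if t ≤ d then I + d + 1 - t else I + t + 1))
  · intro a ha b hb hab
    have hm := hWinj _ _ hab
    rcases modN_cases hN (by split_ifs <;> (try contradiction) <;> omega) (by split_ifs <;> (try contradiction) <;> omega) hm
      with h' | h' | h' | h' | h' <;> (split_ifs at h' <;> omega)
  · intro t ht
    by_cases h0 : t = 0
    · refine adj_congr hchord (Wsh hWper ?_) (Wsh hWper ?_) <;> (split_ifs <;> (try contradiction) <;> omega)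
    · by_cases h1 : t + 1 ≤ d
      · refine adj_congr (hham' (I + d - t)).symm (Wsh hWper ?_) (Wsh hWper ?_) <;>
          (split_ifs <;> (try contradiction) <;> omega)
      · by_cases h2 : t ≤ d
        · refine adj_congr h (Wsh hWper ?_) (Wsh hWper ?_) <;> (split_ifs <;> (try contradiction) <;> omega)
        · refine adj_congr (hham' (I + t + 1)) (Wsh hWper ?_) (Wsh hWper ?_) <;>
            (split_ifs <;> (try contradiction) <;> omega)
  · refine adj_congr (hham' (I + 2*n - 1)) (Wsh hWper ?_) (Wsh hWper ?_) <;>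
      (split_ifs <;> (try contradiction) <;> omega)

/-- If `(i, i+d)` is a `G`-edge with `4 ≤ d ≤ 2n-4`, then `(i-1, i+d-2)` is not. -/
private lemma fact2 (hham' : ∀ k : ℕ, G.Adj (W k) (W (k + 1)))
    (hWper : ∀ x, W (x + 2*n) = W x)
    (hWinj : ∀ x y : ℕ, W x = W y → x % (2*n) = y % (2*n))
    (hG : ¬ HasCycleLen G (2*n - 1))
    {I d : ℕ} (hI : I < 2*n) (hd4 : 4 ≤ d) (hd4' : d ≤ 2*n - 4)
    (hchord : G.Adj (W I) (W (I + d))) :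
    ¬ G.Adj (W (I + 2*n - 1)) (W (I + d - 2)) := by
  intro h
  apply hG
  have hN : 0 < 2*n := by omega
  apply hasCycleLen_of_fn G (2*n - 1) (by omega)
    (fun t => W (if t = 0 then I else if t ≤ 2*n - d then I + d - 1 + t else I + 2*n - 1 - t))
  · intro a ha b hb hab
    have hm := hWinj _ _ hab
    rcases modN_cases hN (by split_ifs <;> (try contradiction) <;> omega) (by split_ifs <;> (try contradiction) <;> omega) hm
      with h' | h' | h' | h' | h' <;> (split_ifs at h' <;> omega)
  · intro t ht
    by_cases h0 : t = 0
    · refine adj_congr hchord (Wsh hWper ?_) (Wsh hWper ?_) <;> (split_ifs <;> (try contradiction) <;> omega)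
    · by_cases h1 : t + 1 ≤ 2*n - d
      · refine adj_congr (hham' (I + d - 1 + t)) (Wsh hWper ?_) (Wsh hWper ?_) <;>
          (split_ifs <;> (try contradiction) <;> omega)
      · by_cases h2 : t ≤ 2*n - d
        · refine adj_congr h (Wsh hWper ?_) (Wsh hWper ?_) <;> (split_ifs <;> (try contradiction) <;> omega)
        · refine adj_congr (hham' (I + 2*n - 2 - t)).symm (Wsh hWper ?_) (Wsh hWper ?_) <;>
            (split_ifs <;> (try contradiction) <;> omega)
  · refine adj_congr (hham' I).symm (Wsh hWper ?_) (Wsh hWper ?_) <;>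
      (split_ifs <;> (try contradiction) <;> omega)

/-- The `(2n-1)`-cycle in the complement built from the two arcs of the two parity
classes together with the two cross edges. -/
private lemma blueCycle {V : Type*} {H : SimpleGraph V} {n : ℕ} {W : ℕ → V}
    (hWper : ∀ x, W (x + 2*n) = W x)
    (hWinj : ∀ x y : ℕ, W x = W y → x % (2*n) = y % (2*n))
    {I d : ℕ} (hI : I < 2*n) (hd4 : 4 ≤ d) (hd4' : d ≤ 2*n - 4) (hdpar : d % 2 = 0)
    (hb1 : H.Adj (W (I + 1)) (W (I + d + 2)))
    (hb2 : H.Adj (W (I + 2*n - 1)) (W (I + d - 2)))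
    (harc : ∀ k : ℕ, H.Adj (W k) (W (k + 2))) :
    HasCycleLen H (2*n - 1) := by
  have hN : 0 < 2*n := by omega
  apply hasCycleLen_of_fn H (2*n - 1) (by omega)
    (fun t => W (if t < n then I + 1 + 2*t else I + d + 2*n - 2 - 2*(t - n)))
  · intro a ha b hb hab
    have hm := hWinj _ _ hab
    have hp : (if a < n then I + 1 + 2*a else I + d + 2*n - 2 - 2*(a - n)) % 2
        = (if b < n then I + 1 + 2*b else I + d + 2*n - 2 - 2*(b - n)) % 2 := by
      rw [← Nat.mod_mod_of_dvd _ (⟨n, rfl⟩ : 2 ∣ 2*n), hm, Nat.mod_mod_of_dvd _ ⟨n, rfl⟩]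
    rcases modN_cases hN (by split_ifs <;> omega) (by split_ifs <;> omega) hm
      with h' | h' | h' | h' | h' <;> (split_ifs at h' hp <;> (try contradiction) <;> omega)
  · intro t ht
    by_cases hA : t + 1 < n
    · refine adj_congr (harc (I + 1 + 2*t)) (Wsh hWper ?_) (Wsh hWper ?_) <;>
        (split_ifs <;> (try contradiction) <;> omega)
    · by_cases hB : t < n
      · refine adj_congr hb2 (Wsh hWper ?_) (Wsh hWper ?_) <;>
          (split_ifs <;> (try contradiction) <;> omega)
      · refine adj_congr (harc (I + d + 2*n - 2 - 2*(t + 1 - n))).symm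
          (Wsh hWper ?_) (Wsh hWper ?_) <;>
          (split_ifs <;> (try contradiction) <;> omega)
  · refine adj_congr hb1.symm (Wsh hWper ?_) (Wsh hWper ?_) <;>
      (split_ifs <;> (try contradiction) <;> omega)

end AbstractCycle

/-- If the vertices of `G` are listed along a Hamiltonian cycle
`v 0, v 1, ..., v (2n-1)` and neither `G` nor its complement contains a
cycle of length `2n - 1`, then the vertices of even index and the vertices of
odd index form two independent sets of `G`. -/
theorem alternate_sets_independent {V : Type*} [Fintype V]
    (G : SimpleGraph V) (n : ℕ) (hcard : Fintype.card V = 2 * n)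
    (v : Fin (2 * n) → V) (hbij : Function.Bijective v)
    (hham : ∀ i : Fin (2 * n),
      G.Adj (v i) (v ⟨(i.val + 1) % (2 * n), Nat.mod_lt _ i.pos⟩))
    (hG : ¬ HasCycleLen G (2 * n - 1)) (hGc : ¬ HasCycleLen Gᶜ (2 * n - 1)) :
    ∀ i j : Fin (2 * n), i ≠ j → i.val % 2 = j.val % 2 → ¬ G.Adj (v i) (v j) := by
  intro i j hne hpar hadj
  have hN : 0 < 2 * n := i.pos
  have hvne : i.val ≠ j.val := fun h => hne (Fin.ext h)
  have hi := i.isLt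
  have hj := j.isLt
  have hn2 : 2 ≤ n := by omega
  set W : ℕ → V := fun k => v ⟨k % (2 * n), Nat.mod_lt _ hN⟩ with hWdef
  have hWper : ∀ x, W (x + 2 * n) = W x := by
    intro x; rw [hWdef]; exact congrArg v (Fin.ext (Nat.add_mod_right x (2 * n)))
  have hWinj : ∀ x y : ℕ, W x = W y → x % (2 * n) = y % (2 * n) := by
    intro x y h
    rw [hWdef] at h
    exact congrArg Fin.val (hbij.injective h)
  have hham' : ∀ k : ℕ, G.Adj (W k) (W (k + 1)) := by
    intro k
    have h := hham ⟨k % (2 * n), Nat.mod_lt _ hN⟩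
    have e : W (k + 1) = v ⟨(k % (2 * n) + 1) % (2 * n), Nat.mod_lt _ hN⟩ := by
      rw [hWdef]; exact congrArg v (Fin.ext (Nat.mod_add_mod k (2 * n) 1).symm)
    have e0 : W k = v ⟨k % (2 * n), Nat.mod_lt _ hN⟩ := by rw [hWdef]
    rw [e0, e]
    exact h
  have hchord0 : G.Adj (W i.val) (W j.val) := by
    have e1 : W i.val = v i := by rw [hWdef]; exact congrArg v (Fin.ext (Nat.mod_eq_of_lt hi))
    have e2 : W j.val = v j := by rw [hWdef]; exact congrArg v (Fin.ext (Nat.mod_eq_of_lt hj))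
    rw [e1, e2]; exact hadj
  obtain ⟨d, hd⟩ : ∃ d, d = (j.val + 2 * n - i.val) % (2 * n) := ⟨_, rfl⟩
  have hdlt : d < 2 * n := by rw [hd]; exact Nat.mod_lt _ hN
  have hdpar : d % 2 = 0 := by
    have h2 : d % 2 = (j.val + 2 * n - i.val) % 2 := by
      rw [hd]; exact Nat.mod_mod_of_dvd _ ⟨n, rfl⟩
    omega
  have hJmod : (i.val + d) % (2 * n) = j.val % (2 * n) := by
    rw [hd, Nat.add_mod, Nat.mod_mod_of_dvd _ dvd_rfl, ← Nat.add_mod,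
      show i.val + (j.val + 2 * n - i.val) = j.val + 2 * n by omega, Nat.add_mod_right]
  have hchord : G.Adj (W i.val) (W (i.val + d)) := by
    rw [Wcongmod hWper hJmod]; exact hchord0
  have hdne0 : d ≠ 0 := by
    intro h0
    have hz : (j.val + 2 * n - i.val) % (2 * n) = 0 % (2 * n) := by
      rw [Nat.zero_mod, ← hd]; exact h0
    rcases modN_cases hN (by omega) (by omega) hz with h' | h' | h' | h' | h' <;> omega
  have harc := blueArc hn2 hham' hWper hWinj hG
  have hred2 := red2 hn2 hham' hWper hWinj hG
  rcases (by omega : d = 2 ∨ d = 2 * n - 2 ∨ (4 ≤ d ∧ d ≤ 2 * n - 4)) with hc | hc | ⟨h4, h4'⟩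
  · exact hred2 i.val hi (adj_congr hchord rfl (Wsh hWper (by omega)))
  · have hb := harc (i.val + d)
    rw [SimpleGraph.compl_adj] at hb
    exact hb.2 (adj_congr hchord.symm rfl (Wsh hWper (by omega)))
  · have hf1 := fact1 hham' hWper hWinj hG hi h4 h4' hchord
    have hf2 := fact2 hham' hWper hWinj hG hi h4 h4' hchord
    have hb1 : Gᶜ.Adj (W (i.val + 1)) (W (i.val + d + 2)) := by
      rw [SimpleGraph.compl_adj]
      refine ⟨fun he => ?_, hf1⟩
      have hm := hWinj _ _ he
      rcases modN_cases hN (by omega) (by omega) hm with h' | h' | h' | h' | h' <;> omega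
    have hb2 : Gᶜ.Adj (W (i.val + 2 * n - 1)) (W (i.val + d - 2)) := by
      rw [SimpleGraph.compl_adj]
      refine ⟨fun he => ?_, hf2⟩
      have hm := hWinj _ _ he
      rcases modN_cases hN (by omega) (by omega) hm with h' | h' | h' | h' | h' <;> omega
    exact hGc (blueCycle hWper hWinj hi h4 h4' hdpar hb1 hb2 harc)
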